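/- If χ(y) = T̄(y) − Ma²k_x²(ū(y) − c)²/(k_x² + k_z²) is strictly positive on [y_l, y_h], and g̃ is a C² complex-valued function on [y_l, y_h] vanishing at both endpoints and satisfying d/dy((ū−c)²/χ · dg̃/dy) = (k_x²+k_z²)(ū−c)² g̃ / T̄ with real wave speed c satisfying c < min ū or c > max ū on [y_l,y_h], and (k_x,k_z) ≠ (0,0), then g̃ ≡ 0. -/
import Mathlib


open Set

/-- If χ > 0 on [y_l,y_h] and g̃ is C², vanishes at endpoints, satisfies the
compressible Rayleigh equation in g̃-form with real wave speed c outside the range of ū,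
and (k_x,k_z) ≠ (0,0), then g̃ ≡ 0. -/
theorem no_nontrivial_neutral_mode_of_chi_pos
    (yl yh : ℝ) (hy : yl < yh)
    (ubar Tbar : ℝ → ℝ) (Ma kx kz c : ℝ)
    (hucont : ContinuousOn ubar (Icc yl yh))
    (hTcont : ContinuousOn Tbar (Icc yl yh))
    (hT : ∀ y ∈ Icc yl yh, 0 < Tbar y)
    (hMa : 0 < Ma) (hk : 0 < kx ^ 2 + kz ^ 2)
    (hchi : ∀ y ∈ Icc yl yh,
      0 < Tbar y - Ma ^ 2 * kx ^ 2 * (ubar y - c) ^ 2 / (kx ^ 2 + kz ^ 2))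
    (hc : (∀ y ∈ Icc yl yh, c < ubar y) ∨ (∀ y ∈ Icc yl yh, ubar y < c))
    (g g' : ℝ → ℂ)
    (hg : ∀ y ∈ Icc yl yh, HasDerivAt g (g' y) y)
    (hg'cont : ContinuousOn g' (Icc yl yh))
    (hode : ∀ y ∈ Icc yl yh,
      HasDerivAt
        (fun t => (((ubar t - c) ^ 2 /
            (Tbar t - Ma ^ 2 * kx ^ 2 * (ubar t - c) ^ 2 / (kx ^ 2 + kz ^ 2)) : ℝ) : ℂ)
          * g' t)
        ((((kx ^ 2 + kz ^ 2) * (ubar y - c) ^ 2 / Tbar y : ℝ) : ℂ) * g y) y)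
    (hbl : g yl = 0) (hbh : g yh = 0) :
    ∀ y ∈ Icc yl yh, g y = 0 := by
  set χ : ℝ → ℝ := fun t => Tbar t - Ma ^ 2 * kx ^ 2 * (ubar t - c) ^ 2 / (kx ^ 2 + kz ^ 2)
    with hχdef
  set p : ℝ → ℝ := fun t => (ubar t - c) ^ 2 / χ t with hpdef
  set q : ℝ → ℝ := fun t => (kx ^ 2 + kz ^ 2) * (ubar t - c) ^ 2 / Tbar t with hqdef
  -- positivity of (ubar - c)^2
  have husq : ∀ y ∈ Icc yl yh, 0 < (ubar y - c) ^ 2 := by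
    intro y hyy
    have hne : ubar y - c ≠ 0 := by
      rcases hc with h | h
      · have := h y hyy; intro h0; linarith [sub_eq_zero.mp h0]
      · have := h y hyy; intro h0; linarith [sub_eq_zero.mp h0]
    positivity
  have hqpos : ∀ y ∈ Icc yl yh, 0 < q y := by
    intro y hyy
    have h1 := husq y hyy
    have h2 := hT y hyy
    exact div_pos (mul_pos hk h1) h2
  have hppos : ∀ y ∈ Icc yl yh, 0 < p y := fun y hyy =>
    div_pos (husq y hyy) (hchi y hyy)
  -- continuity
  have hgcont : ContinuousOn g (Icc yl yh) := fun y hyy =>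
    ((hg y hyy).continuousAt).continuousWithinAt
  have hχcont : ContinuousOn χ (Icc yl yh) := by
    apply hTcont.sub
    exact (continuousOn_const.mul ((hucont.sub continuousOn_const).pow 2)).div
      continuousOn_const (fun y _ => hk.ne')
  have hpcont : ContinuousOn p (Icc yl yh) :=
    ((hucont.sub continuousOn_const).pow 2).div hχcont (fun y hyy => (hchi y hyy).ne')
  have hqcont : ContinuousOn q (Icc yl yh) :=
    (continuousOn_const.mul ((hucont.sub continuousOn_const).pow 2)).div hTcont
      (fun y hyy => (hT y hyy).ne')
  -- the energy density
  set h : ℝ → ℝ := fun t => q t * Complex.normSq (g t) + p t * Complex.normSq (g' t)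
    with hhdef
  have hhcont : ContinuousOn h (Icc yl yh) := by
    apply (hqcont.mul (Complex.continuous_normSq.comp_continuousOn hgcont)).add
    exact hpcont.mul (Complex.continuous_normSq.comp_continuousOn hg'cont)
  have hhnonneg : ∀ y ∈ Icc yl yh, 0 ≤ h y := by
    intro y hyy
    have := (hqpos y hyy).le
    have := (hppos y hyy).le
    have := Complex.normSq_nonneg (g y)
    have := Complex.normSq_nonneg (g' y)
    simp only [hhdef]
    positivity
  -- the complex energy
  set Φ : ℝ → ℂ := fun t => ((p t : ℝ) : ℂ) * g' t * (starRingEnd ℂ) (g t) with hΦdef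
  have hΦderiv : ∀ y ∈ Icc yl yh, HasDerivAt Φ ((h y : ℝ) : ℂ) y := by
    intro y hyy
    have h1 := (hode y hyy).mul ((hg y hyy).star)
    have : (((kx ^ 2 + kz ^ 2) * (ubar y - c) ^ 2 / Tbar y : ℝ) : ℂ) * g y *
        star (g y) + ((p y : ℝ) : ℂ) * g' y * star (g' y) = ((h y : ℝ) : ℂ) := by
      simp only [hhdef, hqdef, hpdef, hχdef]
      rw [mul_assoc, mul_assoc]
      rw [show star (g y) = (starRingEnd ℂ) (g y) from rfl,
        show star (g' y) = (starRingEnd ℂ) (g' y) from rfl,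
        Complex.mul_conj, Complex.mul_conj]
      push_cast
      ring
    rw [← this]
    exact h1
  have hint : IntervalIntegrable (fun t => ((h t : ℝ) : ℂ)) MeasureTheory.volume yl yh := by
    apply ContinuousOn.intervalIntegrable
    rw [uIcc_of_le hy.le]
    exact Complex.continuous_ofReal.comp_continuousOn hhcont
  have hFTC : ∫ t in yl..yh, ((h t : ℝ) : ℂ) = Φ yh - Φ yl := by
    apply intervalIntegral.integral_eq_sub_of_hasDerivAt
    · intro y hyy
      rw [uIcc_of_le hy.le] at hyy
      exact hΦderiv y hyy
    · exact hint
  have hΦend : Φ yh - Φ yl = 0 := by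
    simp [hΦdef, hbl, hbh]
  have hintzero : ∫ t in yl..yh, h t = 0 := by
    have : ((∫ t in yl..yh, h t : ℝ) : ℂ) = 0 := by
      rw [← intervalIntegral.integral_ofReal, hFTC, hΦend]
    exact_mod_cast this
  -- conclude
  intro y hyy
  by_contra hne
  have hpos : 0 < ∫ t in yl..yh, h t := by
    apply intervalIntegral.integral_pos hy hhcont
    · intro x hx
      exact hhnonneg x (Ioc_subset_Icc_self hx)
    · refine ⟨y, hyy, ?_⟩
      have h1 := hqpos y hyy
      have h2 : 0 < Complex.normSq (g y) := by
        simpa [Complex.normSq_pos] using hne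
      have h3 := mul_nonneg (hppos y hyy).le (Complex.normSq_nonneg (g' y))
      have : 0 < q y * Complex.normSq (g y) := mul_pos h1 h2
      simp only [hhdef]
      linarith
  exact hpos.ne' hintzero
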